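/- (Theorem 1, two-cell case, algebraic form.) Let β₁ > 0, β₂ > 0, ε ≥ 0. Define φ = β₁²/(ε + β₁ + β₂), a = φ β₂/β₁, λ = (β₁ − φ)² + a², and the limiting coefficients from Lemma 1 of group-blind detection: the desired-signal coefficient c₁ = φ, the pilot-sharing-interferer coefficient c₂ = a − a³/λ, and the estimation-error coefficient c₃ = a²(β₁ − φ)/λ. Then the resulting asymptotic SINR satisfies c₁²/(c₂² + c₃²) = [1 + 1/(1 + ε/β₂)²] · (β₁/β₂)². -/

import Mathlib

/-- Theorem 1 (two-cell case, algebraic form): with the limiting coefficients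
`c₁ = φ`, `c₂ = a − a³/λ`, `c₃ = a²(β₁ − φ)/λ` of the group-blind detector,
where `φ = β₁²/(ε + β₁ + β₂)`, `a = φβ₂/β₁`, `λ = (β₁ − φ)² + a²`, the
asymptotic SINR equals `[1 + 1/(1 + ε/β₂)²] (β₁/β₂)²`. -/
theorem groupblind_SINR_two_cells
    (β₁ β₂ ε : ℝ) (hβ₁ : 0 < β₁) (hβ₂ : 0 < β₂) (hε : 0 ≤ ε)
    (φ a lam c₁ c₂ c₃ : ℝ)
    (hφ : φ = β₁ ^ 2 / (ε + β₁ + β₂))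
    (ha : a = φ * β₂ / β₁)
    (hlam : lam = (β₁ - φ) ^ 2 + a ^ 2)
    (hc₁ : c₁ = φ)
    (hc₂ : c₂ = a - a ^ 3 / lam)
    (hc₃ : c₃ = a ^ 2 * (β₁ - φ) / lam) :
    c₁ ^ 2 / (c₂ ^ 2 + c₃ ^ 2) =
      (1 + 1 / (1 + ε / β₂) ^ 2) * (β₁ / β₂) ^ 2 := by
  have hs : (0:ℝ) < ε + β₁ + β₂ := by linarith
  have heb : (0:ℝ) < ε + β₂ := by linarith
  have hq : (0:ℝ) < (ε + β₂) ^ 2 + β₂ ^ 2 := by positivity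
  have hav : a = β₁ * β₂ / (ε + β₁ + β₂) := by
    rw [ha, hφ]; field_simp
  have hbφ : β₁ - φ = β₁ * (ε + β₂) / (ε + β₁ + β₂) := by
    rw [hφ]; field_simp; ring
  have hlamv : lam = β₁ ^ 2 * ((ε + β₂) ^ 2 + β₂ ^ 2) / (ε + β₁ + β₂) ^ 2 := by
    rw [hlam, hbφ, hav]; field_simp
  have hc₂' : c₂ = β₁ * β₂ * (ε + β₂) ^ 2 /
      ((ε + β₁ + β₂) * ((ε + β₂) ^ 2 + β₂ ^ 2)) := by
    rw [hc₂, hav, hlamv]; field_simp; ring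
  have hc₃' : c₃ = β₁ * β₂ ^ 2 * (ε + β₂) /
      ((ε + β₁ + β₂) * ((ε + β₂) ^ 2 + β₂ ^ 2)) := by
    rw [hc₃, hav, hlamv, hbφ]; field_simp
  have hden : c₂ ^ 2 + c₃ ^ 2 = β₁ ^ 2 * β₂ ^ 2 * (ε + β₂) ^ 2 /
      ((ε + β₁ + β₂) ^ 2 * ((ε + β₂) ^ 2 + β₂ ^ 2)) := by
    rw [hc₂', hc₃']; field_simp
  rw [hc₁, hφ, hden]
  have h1 : (1 + ε / β₂) = (ε + β₂) / β₂ := by field_simp; ring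
  rw [h1]
  field_simp
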